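/- Define the context density ϕ(u_1, ..., u_p) = ∫_ℝ g(u_1, ..., u_p, ξ) dξ = (1/N)·Σ_{n=1}^N ∏_{j=1}^p (1/h)·k((u_j − y_{n−(p+1)+j})/h), and the KDE-MM next-step (transition) density under periodic extension, T(x | u_1, ..., u_p) = g(u_1, ..., u_p, x) / ϕ(u_1, ..., u_p) (well defined since k > 0 implies ϕ > 0 everywhere). Then ϕ is a stationary density for this transition kernel: for every (x_2, ..., x_{p+1}) ∈ ℝ^p, ∫_ℝ T(x_{p+1} | x_1, ..., x_p)·ϕ(x_1, ..., x_p) dx_1 = ϕ(x_2, ..., x_{p+1}). Hence, with periodic extension of the training data, the stationary distribution of the order-p Markov chain generated by the KDE-MM equals the KDE of the context distribution. -/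

import Mathlib

open MeasureTheory Finset in
/-- With periodic extension of the training data, the KDE of the context distribution `ϕ`
is a stationary density for the KDE-MM next-step transition kernel
`T(x | u) = g(u, x)/ϕ(u)`: integrating `T(x_{p+1} | x_1,…,x_p) ϕ(x_1,…,x_p)` over `x_1`
returns `ϕ(x_2,…,x_{p+1})`. -/
theorem periodic_kdemm_stationary_density
    (p N : ℕ) (hp : 1 ≤ p) (hN : 1 ≤ N)
    (y : ℤ → ℝ) (hy_per : ∀ n : ℤ, y (n + N) = y n)
    (h : ℝ) (hh : 0 < h)
    (k : ℝ → ℝ) (hk_meas : Measurable k) (hk_pos : ∀ r, 0 < k r)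
    (hk_int : ∫ r : ℝ, k r = 1) :
    let g : (Fin (p + 1) → ℝ) → ℝ := fun x =>
      (1 / (N : ℝ)) * ∑ n ∈ Finset.Icc 1 N,
        ∏ j : Fin (p + 1), (1 / h) * k ((x j - y ((n : ℤ) - (p + 1) + ((j : ℕ) + 1))) / h)
    let ϕ : (Fin p → ℝ) → ℝ := fun u =>
      (1 / (N : ℝ)) * ∑ n ∈ Finset.Icc 1 N,
        ∏ j : Fin p, (1 / h) * k ((u j - y ((n : ℤ) - (p + 1) + ((j : ℕ) + 1))) / h)
    let T : ℝ → (Fin p → ℝ) → ℝ := fun x u => g (Fin.snoc u x) / ϕ u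
    ∀ v : Fin p → ℝ,
      (∫ ξ : ℝ,
          T (v ⟨p - 1, by omega⟩) (Fin.init (Fin.cons ξ v : Fin (p + 1) → ℝ)) *
            ϕ (Fin.init (Fin.cons ξ v : Fin (p + 1) → ℝ))) = ϕ v := by
  intro g ϕ T v
  have hk_integrable : Integrable k := by
    by_contra hc
    rw [integral_undef hc] at hk_int
    norm_num at hk_int
  have hNpos : (0 : ℝ) < N := by exact_mod_cast hN
  have hϕpos : ∀ u : Fin p → ℝ, 0 < ϕ u := by
    intro u
    apply mul_pos (one_div_pos.mpr hNpos)
    apply Finset.sum_pos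
    · intro n _
      exact Finset.prod_pos fun j _ => mul_pos (one_div_pos.mpr hh) (hk_pos _)
    · exact Finset.nonempty_Icc.2 hN
  -- the integrand equals g (Fin.cons ξ v)
  have key : ∀ ξ : ℝ,
      T (v ⟨p - 1, by omega⟩) (Fin.init (Fin.cons ξ v : Fin (p + 1) → ℝ)) *
          ϕ (Fin.init (Fin.cons ξ v : Fin (p + 1) → ℝ)) = g (Fin.cons ξ v) := by
    intro ξ
    have hlast : v ⟨p - 1, by omega⟩ = (Fin.cons ξ v : Fin (p + 1) → ℝ) (Fin.last p) := by
      have hl : (Fin.last p) = Fin.succ ⟨p - 1, by omega⟩ := by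
        ext
        simp [Fin.last]
        omega
      rw [hl, Fin.cons_succ]
    have hsnoc : (Fin.snoc (Fin.init (Fin.cons ξ v : Fin (p + 1) → ℝ))
        (v ⟨p - 1, by omega⟩) : Fin (p + 1) → ℝ) = Fin.cons ξ v := by
      rw [hlast, Fin.snoc_init_self]
    show g _ / ϕ _ * ϕ _ = _
    rw [div_mul_cancel₀ _ (ne_of_gt (hϕpos _)), hsnoc]
  simp only [key]
  -- expand g (cons ξ v)
  have hgval : ∀ ξ : ℝ, g (Fin.cons ξ v) =
      (1 / (N : ℝ)) * ∑ n ∈ Finset.Icc 1 N,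
        ((1 / h) * k ((ξ - y ((n : ℤ) - (p + 1) + 1)) / h) *
          ∏ j : Fin p, (1 / h) * k ((v j - y ((n : ℤ) - (p + 1) + ((j : ℕ) + 2))) / h)) := by
    intro ξ
    show (1 / (N : ℝ)) * _ = _
    congr 1
    apply Finset.sum_congr rfl
    intro n _
    rw [Fin.prod_univ_succ]
    have a0 : (1 / h) * k (((Fin.cons ξ v : Fin (p + 1) → ℝ) 0 -
        y ((n : ℤ) - (p + 1) + (((0 : Fin (p + 1)) : ℕ) + 1))) / h)
        = (1 / h) * k ((ξ - y ((n : ℤ) - (p + 1) + 1)) / h) := by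
      simp
    have a1 : (∏ j : Fin p, (1 / h) * k (((Fin.cons ξ v : Fin (p + 1) → ℝ) j.succ -
        y ((n : ℤ) - (p + 1) + (((j.succ : Fin (p + 1)) : ℕ) + 1))) / h))
        = ∏ j : Fin p, (1 / h) * k ((v j - y ((n : ℤ) - (p + 1) + ((j : ℕ) + 2))) / h) := by
      refine Finset.prod_congr rfl fun j _ => ?_
      simp only [Fin.cons_succ, Fin.val_succ]
      have : ((n : ℤ) - (p + 1) + (((j : ℕ) + 1 : ℕ) + 1)) = ((n : ℤ) - (p + 1) + ((j : ℕ) + 2)) := by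
        push_cast
        ring
      rw [this]
    rw [a0, a1]
  simp only [hgval]
  -- integrability of each summand
  have hint : ∀ c : ℝ, Integrable (fun ξ : ℝ => k ((ξ - c) / h)) := by
    intro c
    have h1 : Integrable (fun ξ : ℝ => k (ξ / h)) := hk_integrable.comp_div (ne_of_gt hh)
    have h2 := h1.comp_sub_right c
    simpa using h2
  have hunit : ∀ c : ℝ, (∫ ξ : ℝ, (1 / h) * k ((ξ - c) / h)) = 1 := by
    intro c
    rw [MeasureTheory.integral_const_mul]
    have h1 : (∫ ξ : ℝ, k ((ξ - c) / h)) = ∫ ξ : ℝ, k (ξ / h) :=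
      integral_sub_right_eq_self (fun t => k (t / h)) c
    rw [h1, MeasureTheory.Measure.integral_comp_div k h, hk_int]
    rw [abs_of_pos hh]
    simp
    field_simp
  -- compute the integral
  have hintsum : ∀ n ∈ Finset.Icc 1 N, Integrable (fun ξ : ℝ =>
      (1 / h) * k ((ξ - y ((n : ℤ) - (p + 1) + 1)) / h) *
        ∏ j : Fin p, (1 / h) * k ((v j - y ((n : ℤ) - (p + 1) + ((j : ℕ) + 2))) / h)) := by
    intro n _
    exact (((hint _).const_mul _).mul_const _)
  rw [MeasureTheory.integral_const_mul, MeasureTheory.integral_finset_sum _ hintsum]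
  have hterm : ∀ n ∈ Finset.Icc 1 N,
      (∫ ξ : ℝ, (1 / h) * k ((ξ - y ((n : ℤ) - (p + 1) + 1)) / h) *
          ∏ j : Fin p, (1 / h) * k ((v j - y ((n : ℤ) - (p + 1) + ((j : ℕ) + 2))) / h)) =
      ∏ j : Fin p, (1 / h) * k ((v j - y ((n : ℤ) + 1 - (p + 1) + ((j : ℕ) + 1))) / h) := by
    intro n _
    rw [MeasureTheory.integral_mul_const, hunit, one_mul]
    apply Finset.prod_congr rfl
    intro j _
    congr 2
    ring_nf
  rw [Finset.sum_congr rfl hterm]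
  -- now the periodic reindexing
  show (1 / (N : ℝ)) * _ = (1 / (N : ℝ)) * _
  congr 1
  set F : ℤ → ℝ := fun m =>
    ∏ j : Fin p, (1 / h) * k ((v j - y (m - (p + 1) + ((j : ℕ) + 1))) / h) with hF
  have hFper : ∀ m : ℤ, F (m + N) = F m := by
    intro m
    apply Finset.prod_congr rfl
    intro j _
    have : (m : ℤ) + N - (p + 1) + ((j : ℕ) + 1) = (m - (p + 1) + ((j : ℕ) + 1)) + N := by ring
    rw [this, hy_per]
  have hL : ∀ n : ℕ, (∏ j : Fin p, (1 / h) *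
      k ((v j - y ((n : ℤ) + 1 - (p + 1) + ((j : ℕ) + 1))) / h)) = F ((n : ℤ) + 1) := fun n => rfl
  have hR : ∀ n : ℕ, (∏ j : Fin p, (1 / h) *
      k ((v j - y ((n : ℤ) - (p + 1) + ((j : ℕ) + 1))) / h)) = F (n : ℤ) := fun n => rfl
  simp only [hL, hR]
  -- shift the sum using periodicity
  have key2 : ∑ n ∈ Finset.Icc 1 N, F ((n : ℤ) + 1) = ∑ n ∈ Finset.Icc 1 N, F (n : ℤ) := by
    have e1 : ∀ M : ℕ, ∑ n ∈ Finset.Icc 1 M, F ((n : ℤ) + 1)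
        = ∑ i ∈ Finset.range M, F ((i : ℤ) + 2) := by
      intro M
      rw [← Finset.Ico_add_one_right_eq_Icc, Finset.sum_Ico_eq_sum_range]
      norm_num
      apply Finset.sum_congr rfl
      intro i _
      congr 1
      push_cast
      ring
    have e2 : ∀ M : ℕ, ∑ n ∈ Finset.Icc 1 M, F (n : ℤ)
        = ∑ i ∈ Finset.range M, F ((i : ℤ) + 1) := by
      intro M
      rw [← Finset.Ico_add_one_right_eq_Icc, Finset.sum_Ico_eq_sum_range]
      norm_num
      apply Finset.sum_congr rfl
      intro i _
      congr 1
      push_cast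
      ring
    rw [e1, e2]
    have h1 : ∑ i ∈ Finset.range (N + 1), F ((i : ℤ) + 1)
        = ∑ i ∈ Finset.range N, F ((i : ℤ) + 1) + F ((N : ℤ) + 1) := by
      rw [Finset.sum_range_succ]
    have h2 : ∑ i ∈ Finset.range (N + 1), F ((i : ℤ) + 1)
        = ∑ i ∈ Finset.range N, F ((i : ℤ) + 2) + F 1 := by
      rw [Finset.sum_range_succ']
      have a1 : ∑ i ∈ Finset.range N, F ((((i + 1 : ℕ)) : ℤ) + 1)
          = ∑ i ∈ Finset.range N, F ((i : ℤ) + 2) :=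
        Finset.sum_congr rfl fun i _ => by congr 1 <;> try (push_cast; ring)
      have a2 : F (((0 : ℕ) : ℤ) + 1) = F 1 := by norm_num
      rw [a1, a2]
    have h3 : F ((N : ℤ) + 1) = F 1 := by
      have : (N : ℤ) + 1 = 1 + N := by ring
      rw [this, hFper]
    linarith [h1, h2, h3]
  exact key2
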